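/- arXiv:2103.07598 — 3 statements merged into one kernel-verified Lean document; each statement's English description precedes it below -/
import Mathlib

section
/- For every image x with N patches and every permutation σ of Fin N, W(x, x ∘ σ) = 0; in particular, if x ∘ σ ≠ x (e.g., an image [x₁, x₂] of two distinct patches with its swapped version [x₂, x₁]) then W(x, x ∘ σ) = 0 while the image ℓ1 distance d₁(x, x ∘ σ) > 0, so IWD can vanish on distinct images where every ℓp distance is positive. -/
open Finset

/-- The ℓ1 norm of a patch `u : Fin k → ℝ`. -/
noncomputable def patchL1 {k : ℕ} (u : Fin k → ℝ) : ℝ := ∑ j, |u j|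

/-- The internal Wasserstein distance between two images with `N` patches:
`W(x, y) = (1/N) · min over permutations σ of Fin N of Σ_i ‖x i − y (σ i)‖₁`. -/
noncomputable def IWD {N k : ℕ} (x y : Fin N → Fin k → ℝ) : ℝ :=
  (1 / (N : ℝ)) *
    Finset.univ.inf' Finset.univ_nonempty
      (fun σ : Equiv.Perm (Fin N) => ∑ i, patchL1 (x i - y (σ i)))

/-- The image ℓ1 distance `d₁(x, y) = Σ_i ‖x i − y i‖₁`. -/
noncomputable def imgL1 {N k : ℕ} (x y : Fin N → Fin k → ℝ) : ℝ :=
  ∑ i, patchL1 (x i - y i)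

lemma patchL1_nonneg {k : ℕ} (u : Fin k → ℝ) : 0 ≤ patchL1 u :=
  Finset.sum_nonneg fun j _ => abs_nonneg _

/-- IWD vanishes between an image and any patch permutation of itself,
while the image ℓ1 distance is positive whenever the permuted image differs. -/
theorem iwd_zero_on_patch_permutation (N k : ℕ) (hN : 1 ≤ N) (hk : 1 ≤ k)
    (x : Fin N → Fin k → ℝ) (σ : Equiv.Perm (Fin N)) :
    IWD x (x ∘ σ) = 0 ∧ (x ∘ σ ≠ x → 0 < imgL1 x (x ∘ σ)) := by
  constructor
  · have h0 : Finset.univ.inf' Finset.univ_nonempty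
        (fun τ : Equiv.Perm (Fin N) => ∑ i, patchL1 (x i - x (σ (τ i)))) = 0 := by
      apply le_antisymm
      · have := Finset.inf'_le (b := σ⁻¹)
          (fun τ : Equiv.Perm (Fin N) => ∑ i, patchL1 (x i - x (σ (τ i))))
          (Finset.mem_univ _)
        refine this.trans (le_of_eq ?_)
        simp [Function.comp, patchL1]
      · apply Finset.le_inf'
        intro τ _
        exact Finset.sum_nonneg fun i _ => patchL1_nonneg _
    simp [IWD, Function.comp, h0]
  · intro hne
    have : ∃ i, x i ≠ (x ∘ σ) i := by
      by_contra h
      push_neg at h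
      exact hne (funext fun i => (h i).symm)
    obtain ⟨i, hi⟩ := this
    have : ∃ j, x i j ≠ (x ∘ σ) i j := by
      by_contra h
      push_neg at h
      exact hi (funext h)
    obtain ⟨j, hj⟩ := this
    have hpos : 0 < patchL1 (x i - (x ∘ σ) i) := by
      apply Finset.sum_pos' (fun j _ => abs_nonneg _)
      exact ⟨j, Finset.mem_univ _, abs_pos.2 (sub_ne_zero.2 hj)⟩
    exact Finset.sum_pos' (fun i _ => patchL1_nonneg _) ⟨i, Finset.mem_univ _, hpos⟩
end

section
/- Theorem 1 (ℓ1 case): for every image x with N ≥ 1 patches and every perturbation budget ε > 0, there exists ε' ≤ ε (namely ε' = ε/N) such that diam(B₁(x, ε)) ≤ diam(B_W(x, ε')), i.e., the diameter of the ℓ1 perturbation ball is at most the diameter of the IWD perturbation ball of a no-larger radius. -/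
open Finset

/-- The IWD ball of radius ε around x. -/
def iwdBall {N k : ℕ} (x : Fin N → Fin k → ℝ) (ε : ℝ) : Set (Fin N → Fin k → ℝ) :=
  {y | IWD x y ≤ ε}

/-- The image ℓ1 ball of radius ε around x. -/
def l1Ball {N k : ℕ} (x : Fin N → Fin k → ℝ) (ε : ℝ) : Set (Fin N → Fin k → ℝ) :=
  {y | imgL1 x y ≤ ε}

/-- The diameter of a set of images with respect to the image ℓ1 distance
(with the real-number convention sSup ∅ = 0). -/
noncomputable def imgDiam {N k : ℕ} (A : Set (Fin N → Fin k → ℝ)) : ℝ :=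
  sSup {r : ℝ | ∃ y ∈ A, ∃ z ∈ A, r = imgL1 y z}

lemma patchL1_le {k : ℕ} (u v : Fin k → ℝ) :
    patchL1 u ≤ patchL1 v + patchL1 (v - u) := by
  rw [patchL1, patchL1, patchL1, ← Finset.sum_add_distrib]
  apply Finset.sum_le_sum
  intro j _
  simp only [Pi.sub_apply]
  calc |u j| = |v j - (v j - u j)| := by congr 1; ring
    _ ≤ |v j| + |v j - u j| := abs_sub _ _

/-- If y is in the IWD ball of radius ε', then Σ patchL1 (y i) is bounded. -/
lemma sum_patchL1_bound {N k : ℕ} (hN : 1 ≤ N) (x y : Fin N → Fin k → ℝ) (ε' : ℝ)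
    (hy : IWD x y ≤ ε') :
    ∑ i, patchL1 (y i) ≤ (∑ i, patchL1 (x i)) + N * ε' := by
  have hNpos : (0 : ℝ) < N := by exact_mod_cast Nat.lt_of_lt_of_le Nat.zero_lt_one hN
  -- get a permutation attaining the inf
  obtain ⟨σ, -, hσ⟩ := Finset.exists_mem_eq_inf' (Finset.univ_nonempty)
    (fun σ : Equiv.Perm (Fin N) => ∑ i, patchL1 (x i - y (σ i)))
  have hsum : ∑ i, patchL1 (x i - y (σ i)) ≤ N * ε' := by
    have : (1 / (N : ℝ)) * (∑ i, patchL1 (x i - y (σ i))) ≤ ε' := by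
      rw [IWD, hσ] at hy; exact hy
    have := mul_le_mul_of_nonneg_left this (le_of_lt hNpos)
    calc ∑ i, patchL1 (x i - y (σ i))
        = (N : ℝ) * ((1 / (N : ℝ)) * (∑ i, patchL1 (x i - y (σ i)))) := by
          field_simp
      _ ≤ N * ε' := this
  have hre : ∑ i, patchL1 (y i) = ∑ i, patchL1 (y (σ i)) :=
    (Equiv.sum_comp σ (fun i => patchL1 (y i))).symm
  rw [hre]
  calc ∑ i, patchL1 (y (σ i)) ≤ ∑ i, (patchL1 (x i) + patchL1 (x i - y (σ i))) :=
        Finset.sum_le_sum fun i _ => patchL1_le _ _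
    _ = (∑ i, patchL1 (x i)) + ∑ i, patchL1 (x i - y (σ i)) := Finset.sum_add_distrib
    _ ≤ (∑ i, patchL1 (x i)) + N * ε' := by linarith

/-- Theorem 1, ℓ1 case: for every perturbation budget ε > 0 there is a
no-larger IWD budget ε/N whose IWD ball has diameter at least that of the ℓ1 ball. -/
theorem diam_l1Ball_le_diam_iwdBall (N k : ℕ) (hN : 1 ≤ N) (hk : 1 ≤ k)
    (x : Fin N → Fin k → ℝ) (ε : ℝ) (hε : 0 < ε) :
    ∃ ε' : ℝ, ε' ≤ ε ∧ ε' = ε / (N : ℝ) ∧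
      imgDiam (l1Ball x ε) ≤ imgDiam (iwdBall x ε') := by
  have hNpos : (0 : ℝ) < N := by exact_mod_cast Nat.lt_of_lt_of_le Nat.zero_lt_one hN
  have hN1 : (1 : ℝ) ≤ N := by exact_mod_cast hN
  refine ⟨ε / N, ?_, rfl, ?_⟩
  · exact div_le_self hε.le hN1
  -- ball inclusion
  have hsub : l1Ball x ε ⊆ iwdBall x (ε / N) := by
    intro y hy
    simp only [l1Ball, Set.mem_setOf_eq] at hy
    simp only [iwdBall, Set.mem_setOf_eq, IWD]
    have hinf : Finset.univ.inf' Finset.univ_nonempty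
        (fun σ : Equiv.Perm (Fin N) => ∑ i, patchL1 (x i - y (σ i))) ≤ imgL1 x y := by
      apply Finset.inf'_le _ (Finset.mem_univ (Equiv.refl (Fin N)))
    calc (1 / (N : ℝ)) * _ ≤ (1 / (N : ℝ)) * imgL1 x y :=
          mul_le_mul_of_nonneg_left hinf (by positivity)
      _ ≤ (1 / (N : ℝ)) * ε := mul_le_mul_of_nonneg_left hy (by positivity)
      _ = ε / N := by ring
  -- bddAbove of the IWD-ball distance set
  set S := ∑ i, patchL1 (x i) with hS
  have hbdd : BddAbove {r : ℝ | ∃ y ∈ iwdBall x (ε / N), ∃ z ∈ iwdBall x (ε / N),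
      r = imgL1 y z} := by
    refine ⟨2 * (S + N * (ε / N)), ?_⟩
    rintro r ⟨y, hy, z, hz, rfl⟩
    have hy' := sum_patchL1_bound hN x y (ε / N) hy
    have hz' := sum_patchL1_bound hN x z (ε / N) hz
    have : imgL1 y z ≤ ∑ i, (patchL1 (y i) + patchL1 (z i)) := by
      apply Finset.sum_le_sum
      intro i _
      calc patchL1 (y i - z i) ≤ patchL1 (y i) + patchL1 (y i - (y i - z i)) :=
            patchL1_le _ _
        _ = patchL1 (y i) + patchL1 (z i) := by norm_num
    rw [Finset.sum_add_distrib] at this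
    linarith
  -- nonempty of the l1 distance set
  have hne : {r : ℝ | ∃ y ∈ l1Ball x ε, ∃ z ∈ l1Ball x ε, r = imgL1 y z}.Nonempty := by
    refine ⟨imgL1 x x, x, ?_, x, ?_, rfl⟩ <;>
    · simp only [l1Ball, Set.mem_setOf_eq, imgL1, sub_self]
      have : patchL1 (0 : Fin k → ℝ) = 0 := by simp [patchL1]
      simp [this, hε.le]
  apply csSup_le_csSup hbdd hne
  rintro r ⟨y, hy, z, hz, rfl⟩
  exact ⟨y, hsub hy, z, hsub hz, rfl⟩
end

section
/- Every IWD ball contains all patch permutations of its center: for every image x with N patches, every ε ≥ 0, and all permutations σ, τ of Fin N, the images x ∘ σ and x ∘ τ lie in B_W(x, ε); consequently diam(B_W(x, ε)) ≥ d₁(x ∘ σ, x ∘ τ) for all σ, τ. -/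
open Finset

lemma patchL1_sub_le {k : ℕ} (u v : Fin k → ℝ) :
    patchL1 v ≤ patchL1 (u - v) + patchL1 u := by
  unfold patchL1
  rw [← Finset.sum_add_distrib]
  refine Finset.sum_le_sum fun j _ => ?_
  have : v j = u j - (u - v) j := by simp
  rw [this]
  exact (abs_sub _ _).trans (by rw [add_comm])

lemma perm_mem_ball {N k : ℕ} (x : Fin N → Fin k → ℝ) (ε : ℝ) (hε : 0 ≤ ε)
    (σ : Equiv.Perm (Fin N)) : (x ∘ σ) ∈ iwdBall x ε := by
  have h1 : Finset.univ.inf' Finset.univ_nonempty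
      (fun π : Equiv.Perm (Fin N) => ∑ i, patchL1 (x i - (x ∘ σ) (π i))) ≤ 0 := by
    refine le_trans (Finset.inf'_le _ (Finset.mem_univ σ⁻¹)) ?_
    simp [patchL1]
  have : IWD x (x ∘ σ) ≤ 0 :=
    mul_nonpos_iff.mpr (Or.inl ⟨by positivity, h1⟩)
  exact le_trans this hε

lemma ball_sum_bound {N k : ℕ} (x y : Fin N → Fin k → ℝ) (ε : ℝ)
    (hy : y ∈ iwdBall x ε) :
    ∑ i, patchL1 (y i) ≤ (∑ i, patchL1 (x i)) + N * ε := by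
  rcases Finset.exists_mem_eq_inf' (Finset.univ_nonempty)
      (fun π : Equiv.Perm (Fin N) => ∑ i, patchL1 (x i - y (π i))) with ⟨σ₀, -, hσ₀⟩
  rcases Nat.eq_zero_or_pos N with h | h
  · subst h; simp
  have hN0 : (0:ℝ) < N := by exact_mod_cast h
  have hy' : ∑ i, patchL1 (x i - y (σ₀ i)) ≤ N * ε := by
    have := hy
    simp only [iwdBall, Set.mem_setOf_eq, IWD, hσ₀] at this
    calc ∑ i, patchL1 (x i - y (σ₀ i))
        = N * ((1 / (N:ℝ)) * ∑ i, patchL1 (x i - y (σ₀ i))) := by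
          field_simp
      _ ≤ N * ε := by
          exact mul_le_mul_of_nonneg_left this hN0.le
  calc ∑ i, patchL1 (y i) = ∑ i, patchL1 (y (σ₀ i)) :=
        (Equiv.sum_comp σ₀ (fun i => patchL1 (y i))).symm
    _ ≤ ∑ i, (patchL1 (x i - y (σ₀ i)) + patchL1 (x i)) :=
        Finset.sum_le_sum fun i _ => patchL1_sub_le _ _
    _ = (∑ i, patchL1 (x i - y (σ₀ i))) + ∑ i, patchL1 (x i) :=
        Finset.sum_add_distrib
    _ ≤ (∑ i, patchL1 (x i)) + N * ε := by linarith

/-- every IWD ball contains all patch permutations of its center, and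
consequently its diameter dominates the ℓ1 distance between any two such permutations. -/
theorem perms_mem_iwdBall (N k : ℕ) (hN : 1 ≤ N) (hk : 1 ≤ k)
    (x : Fin N → Fin k → ℝ) (ε : ℝ) (hε : 0 ≤ ε) (σ τ : Equiv.Perm (Fin N)) :
    (x ∘ σ) ∈ iwdBall x ε ∧ (x ∘ τ) ∈ iwdBall x ε ∧
      imgL1 (x ∘ σ) (x ∘ τ) ≤ imgDiam (iwdBall x ε) := by

  have hσ := perm_mem_ball x ε hε σ
  have hτ := perm_mem_ball x ε hε τ
  refine ⟨hσ, hτ, ?_⟩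
  have hbdd : BddAbove {r : ℝ | ∃ y ∈ iwdBall x ε, ∃ z ∈ iwdBall x ε, r = imgL1 y z} := by
    refine ⟨2 * ((∑ i, patchL1 (x i)) + N * ε), ?_⟩
    rintro r ⟨y, hy, z, hz, rfl⟩
    have h1 := ball_sum_bound x y ε hy
    have h2 := ball_sum_bound x z ε hz
    have : imgL1 y z ≤ (∑ i, patchL1 (y i)) + ∑ i, patchL1 (z i) := by
      unfold imgL1
      rw [← Finset.sum_add_distrib]
      refine Finset.sum_le_sum fun i _ => ?_
      have := patchL1_sub_le (y i) (z i)
      have h3 : patchL1 (y i - z i) ≤ patchL1 (y i) + patchL1 (z i) := by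
        unfold patchL1
        rw [← Finset.sum_add_distrib]
        exact Finset.sum_le_sum fun j _ => by simpa using abs_sub (y i j) (z i j)
      exact h3
    linarith
  exact le_csSup hbdd ⟨x ∘ σ, hσ, x ∘ τ, hτ, rfl⟩
end
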